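/- Let X₁, X₂, … be i.i.d. copies of a random variable X with values in a measurable space 𝒳, and let φ : 𝒳 → ℝ^d be measurable with E[‖φ(X)‖] < ∞. Then, with probability 1, there exists a positive integer N such that E[φ(X)] is contained in the convex hull of {φ(X₁),…,φ(X_N)}. -/

import Mathlib

open MeasureTheory ProbabilityTheory Metric Set


/-- Stability: if the ball of radius `r` at `0` is inside the convex hull of the `q j`, and
`z j` is `δ`-close to `q j`, then any `x` with `‖x‖ + δ < r` is in the hull of the `z j`. -/
lemma aux_stab {F : Type*} [NormedAddCommGroup F] [NormedSpace ℝ F]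
    {K : ℕ} {q z : Fin K → F} {r δ : ℝ} (hδ0 : 0 ≤ δ)
    (hball : Metric.ball (0 : F) r ⊆ convexHull ℝ (Set.range q))
    (hz : ∀ j, ‖z j - q j‖ ≤ δ) {x : F} (hx : ‖x‖ + δ < r) :
    x ∈ convexHull ℝ (Set.range z) := by
  by_contra hcon
  have hr0 : 0 < r := lt_of_le_of_lt (by positivity) hx
  have hcl : IsClosed (convexHull ℝ (Set.range z)) :=
    ((Set.finite_range z).isCompact_convexHull ℝ).isClosed
  obtain ⟨f, u, hfx, hfb⟩ :=
    geometric_hahn_banach_point_closed (convex_convexHull ℝ _) hcl hcon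
  have hq : ∀ j, u - ‖f‖ * δ ≤ f (q j) := by
    intro j
    have h1 : u < f (z j) := hfb _ (subset_convexHull ℝ _ ⟨j, rfl⟩)
    have h2 : f (z j) - f (q j) ≤ ‖f‖ * δ := by
      calc f (z j) - f (q j) = f (z j - q j) := by rw [map_sub]
        _ ≤ |f (z j - q j)| := le_abs_self _
        _ ≤ ‖f‖ * ‖z j - q j‖ := f.le_opNorm _
        _ ≤ ‖f‖ * δ := by
            exact mul_le_mul_of_nonneg_left (hz j) (norm_nonneg f)
    linarith
  have hhull : convexHull ℝ (Set.range q) ⊆ {y | u - ‖f‖ * δ ≤ f y} := by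
    refine convexHull_min ?_ (convex_halfSpace_ge (⟨map_add f, map_smul f⟩ : IsLinearMap ℝ f) _)
    rintro y ⟨j, rfl⟩; exact hq j
  have hball' : ∀ y : F, ‖y‖ < r → u - ‖f‖ * δ ≤ f y := fun y hy =>
    hhull (hball (mem_ball_zero_iff.mpr hy))
  rcases eq_or_lt_of_le (norm_nonneg f) with hf0 | hpos
  · have hfz : f = 0 := by
      ext y; simp [(norm_eq_zero.mp hf0.symm)]
    have h1 : u - ‖f‖ * δ ≤ f 0 := hball' 0 (by simpa using hr0)
    simp [hfz] at hfx h1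
    have : ‖(0:F →L[ℝ] ℝ)‖ = 0 := norm_zero
    rw [hfz] at hf0
    nlinarith [hδ0]
  · set t : ℝ := (‖x‖ + δ + r) / 2 with ht_def
    have ht1 : ‖x‖ + δ < t := by rw [ht_def]; linarith
    have ht2 : t < r := by rw [ht_def]; linarith
    have ht0 : 0 < t := lt_of_le_of_lt (by positivity) ht1
    set ε : ℝ := ‖f‖ * (t - (‖x‖ + δ)) / (2 * t) with hε_def
    have hε0 : 0 < ε := by
      apply div_pos (mul_pos hpos (by linarith)) (by linarith)
    obtain ⟨y₀, hy₀1, hy₀2⟩ := f.exists_lt_apply_of_lt_opNorm (r := ‖f‖ - ε) (by linarith)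
    have hy₀2' : ‖f‖ - ε < |f y₀| := by simpa [Real.norm_eq_abs] using hy₀2
    -- pick y₁ with f y₁ ≤ -(‖f‖ - ε) and ‖y₁‖ < 1
    obtain ⟨y₁, hy₁n, hy₁f⟩ : ∃ y₁ : F, ‖y₁‖ < 1 ∧ f y₁ ≤ -(‖f‖ - ε) := by
      rcases le_or_gt 0 (f y₀) with h | h
      · exact ⟨-y₀, by simpa using hy₀1, by rw [map_neg]; rw [abs_of_nonneg h] at hy₀2'; linarith⟩
      · exact ⟨y₀, hy₀1, by rw [abs_of_neg h] at hy₀2'; linarith⟩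
    have hy : ‖t • y₁‖ < r := by
      rw [norm_smul, Real.norm_eq_abs, abs_of_pos ht0]
      nlinarith
    have h1 : u - ‖f‖ * δ ≤ f (t • y₁) := hball' _ hy
    have h2 : f (t • y₁) = t * f y₁ := by
      rw [f.map_smul]; simp
    have h3 : t * f y₁ ≤ t * (-(‖f‖ - ε)) := mul_le_mul_of_nonneg_left hy₁f ht0.le
    have h4 : -(‖f‖ * ‖x‖) ≤ f x := by
      have habs : |f x| ≤ ‖f‖ * ‖x‖ := by
        simpa [Real.norm_eq_abs] using f.le_opNorm x
      linarith [neg_abs_le (f x)]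
    have h5 : f x < u := hfx
    -- combine
    have htε : t * ε = ‖f‖ * (t - (‖x‖ + δ)) / 2 := by
      rw [hε_def]; field_simp
    nlinarith [mul_pos hpos (sub_pos.mpr ht1)]


lemma aux_cp {F : Type*} [NormedAddCommGroup F] [NormedSpace ℝ F] [FiniteDimensional ℝ F]
    {r : ℝ} (hr : 0 < r) :
    ∃ (n : ℕ) (p : Fin n → F), (∀ i, ‖p i‖ < r) ∧
      ∃ ρ : ℝ, 0 < ρ ∧ Metric.ball (0 : F) ρ ⊆ convexHull ℝ (Set.range p) := by
  by_cases hsub : Subsingleton F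
  · refine ⟨1, fun _ => 0, by simpa using hr, 1, one_pos, ?_⟩
    intro x _
    have hx0 : x = 0 := Subsingleton.elim x 0
    exact hx0 ▸ subset_convexHull ℝ _ ⟨0, rfl⟩
  · have : Nontrivial F := not_subsingleton_iff_nontrivial.mp hsub
    set m := Module.finrank ℝ F with hm
    have hm0 : 0 < m := Module.finrank_pos
    let b : Module.Basis (Fin m) ℝ F := Module.finBasis ℝ F
    have hbpos : ∀ i, (0:ℝ) < ‖b i‖ :=
      fun i => (norm_nonneg _).lt_of_ne (Ne.symm (norm_ne_zero_iff.mpr (b.ne_zero i)))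
    let c : Fin m → ℝˣ := fun i => Units.mk0 (r / (2 * ‖b i‖))
      (div_ne_zero hr.ne' (by nlinarith [hbpos i]))
    let w : Module.Basis (Fin m) ℝ F := b.unitsSMul c
    have hw : ∀ i, w i = (r / (2 * ‖b i‖)) • b i := by
      intro i
      show b.unitsSMul c i = _
      rw [Module.Basis.unitsSMul_apply]
      rw [Units.smul_def]
      rfl
    have hwn : ∀ i, ‖w i‖ = r / 2 := by
      intro i
      have ha := hbpos i
      rw [hw i, norm_smul, Real.norm_eq_abs, abs_of_pos (div_pos hr (by linarith))]
      field_simp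
    refine ⟨m + m, Sum.elim w (fun i => -(w i)) ∘ finSumFinEquiv.symm, ?_, ?_⟩
    · intro i
      rcases h : finSumFinEquiv.symm i with j | j <;>
        simp [h, hwn, Function.comp] <;> linarith
    · have hrange : Set.range (Sum.elim w (fun i => -(w i)) ∘ finSumFinEquiv.symm)
          = Set.range w ∪ -(Set.range w) := by
        rw [Set.range_comp, Equiv.range_eq_univ, Set.image_univ, Set.Sum.elim_range]
        congr 1
        ext x
        simp only [Set.mem_range, Set.mem_neg]
        constructor
        · rintro ⟨i, rfl⟩; exact ⟨i, by simp⟩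
        · rintro ⟨i, hi⟩; exact ⟨i, by rw [hi]; simp⟩
      set P : Set F := Set.range w ∪ -(Set.range w) with hP
      have hPsymm : -P = P := by
        show -(Set.range ⇑w ∪ -Set.range ⇑w) = _
        rw [show -(Set.range ⇑w ∪ -Set.range ⇑w) = -Set.range ⇑w ∪ - -Set.range ⇑w from rfl,
          neg_neg, Set.union_comm]
      have hPmem : ∀ i, w i ∈ P := fun i => Or.inl ⟨i, rfl⟩
      have hPmem' : ∀ i, -(w i) ∈ P :=
        fun i => Or.inr (by rw [Set.mem_neg, neg_neg]; exact ⟨i, rfl⟩)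
      have i0 : Fin m := ⟨0, hm0⟩
      have h0P : (0 : F) ∈ affineSpan ℝ P := by
        have hmem := (affineSpan ℝ P).smul_vsub_vadd_mem (1/2 : ℝ)
          (subset_affineSpan ℝ P (hPmem' i0)) (subset_affineSpan ℝ P (hPmem i0))
          (subset_affineSpan ℝ P (hPmem i0))
        have heq : ((1/2 : ℝ) • (-(w i0) -ᵥ w i0) +ᵥ w i0) = (0 : F) := by
          simp only [vsub_eq_sub, vadd_eq_add, sub_eq_add_neg]
          module
        rwa [heq] at hmem
      have hspan : affineSpan ℝ P = ⊤ := by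
        have hdir : ∀ v : F, v ∈ (affineSpan ℝ P).direction := by
          intro v
          have hsub2 : Submodule.span ℝ (Set.range ⇑w) ≤ (affineSpan ℝ P).direction := by
            rw [Submodule.span_le]
            rintro _ ⟨i, rfl⟩
            have h1 : w i ∈ affineSpan ℝ P := subset_affineSpan ℝ P (hPmem i)
            have := AffineSubspace.vsub_mem_direction h1 h0P
            simpa using this
          rw [w.span_eq] at hsub2
          exact hsub2 trivial
        rw [eq_top_iff]
        intro v _
        have := AffineSubspace.vadd_mem_of_mem_direction (hdir v) h0P
        simpa using this
      have hconv : Convex ℝ (convexHull ℝ P) := convex_convexHull ℝ P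
      have hint : (interior (convexHull ℝ P)).Nonempty := by
        rw [Convex.interior_nonempty_iff_affineSpan_eq_top hconv, affineSpan_convexHull]
        exact hspan
      obtain ⟨y, hy⟩ := hint
      have hny : -y ∈ interior (convexHull ℝ P) := by
        have h1 : Neg.neg '' interior (convexHull ℝ P)
            = interior (Neg.neg '' convexHull ℝ P) :=
          (Homeomorph.neg F).image_interior _
        have h2 : -y ∈ interior (Neg.neg '' convexHull ℝ P) := by
          rw [← h1]; exact Set.mem_image_of_mem _ hy
        rwa [Set.image_neg_eq_neg, ← convexHull_neg, hPsymm] at h2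
      have h0 : (0 : F) ∈ interior (convexHull ℝ P) := by
        have hc := hconv.interior
        have := hc hy hny (by norm_num : (0:ℝ) ≤ 1/2) (by norm_num : (0:ℝ) ≤ 1/2) (by norm_num)
        simpa using this
      obtain ⟨ρ, hρ0, hρ⟩ := Metric.isOpen_iff.mp isOpen_interior 0 h0
      exact ⟨ρ, hρ0, by rw [hrange]; exact hρ.trans interior_subset⟩

set_option maxHeartbeats 1000000 in
lemma aux_geo {d : ℕ} (ν : Measure (Fin d → ℝ)) [IsProbabilityMeasure ν]
    (hintν : Integrable id ν) (hmeanν : ∫ x, x ∂ν = 0) :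
    ∃ (K : ℕ) (B : Fin K → Set (Fin d → ℝ)), (∀ j, MeasurableSet (B j)) ∧
      (∀ j, 0 < ν (B j)) ∧
      ∀ z : Fin K → (Fin d → ℝ), (∀ j, z j ∈ B j) →
        (0 : Fin d → ℝ) ∈ convexHull ℝ (Set.range z) := by
  classical
  set E := Fin d → ℝ with hE
  -- the subspace of "degenerate directions" in the dual
  set Wd : Submodule ℝ (E →ₗ[ℝ] ℝ) :=
    { carrier := {f | ∀ᵐ x ∂ν, f x = 0}
      add_mem' := by
        intro f g hf hg
        show ∀ᵐ x ∂ν, (f + g) x = 0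
        filter_upwards [hf, hg] with x hfx hgx
        simp [hfx, hgx]
      zero_mem' := by
        show ∀ᵐ x ∂ν, (0 : E →ₗ[ℝ] ℝ) x = 0
        simp
      smul_mem' := by
        intro c f hf
        show ∀ᵐ x ∂ν, (c • f) x = 0
        filter_upwards [hf] with x hfx
        simp [hfx] } with hWd
  have hWd_mem : ∀ f : E →ₗ[ℝ] ℝ, f ∈ Wd ↔ (∀ᵐ x ∂ν, f x = 0) := fun f => Iff.rfl
  set U : Submodule ℝ E :=
    { carrier := {x | ∀ f ∈ Wd, f x = 0}
      add_mem' := by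
        intro a b ha hb f hf
        rw [map_add, ha f hf, hb f hf, add_zero]
      zero_mem' := by intro f _; simp
      smul_mem' := by
        intro c a ha f hf
        rw [f.map_smul, ha f hf, smul_zero] } with hU
  have hU_mem : ∀ x : E, x ∈ U ↔ ∀ f ∈ Wd, f x = 0 := fun x => Iff.rfl
  -- a.e. x is in U
  have hUae : ∀ᵐ x ∂ν, x ∈ U := by
    have : FiniteDimensional ℝ ↥Wd := inferInstance
    haveI : Module.Free ℝ ↥Wd := by exact Module.Free.of_divisionRing ℝ ↥Wd
    set b := Module.finBasis ℝ ↥Wd with hb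
    have hball : ∀ᵐ x ∂ν, ∀ i, ((b i : E →ₗ[ℝ] ℝ)) x = 0 :=
      ae_all_iff.mpr fun i => (b i).2
    filter_upwards [hball] with x hx
    intro f hf
    let ev : ↥Wd →ₗ[ℝ] ℝ :=
      { toFun := fun g => (g : E →ₗ[ℝ] ℝ) x
        map_add' := by intro g h; simp
        map_smul' := by intro c g; simp }
    have hev : ev = 0 := b.ext fun i => by simpa [ev] using hx i
    have : ev ⟨f, hf⟩ = 0 := by rw [hev]; rfl
    simpa [ev] using this
  have hUc : IsClosed (U : Set E) := Submodule.closed_of_finiteDimensional U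
  have hUcompl : ν ((U : Set E)ᶜ) = 0 := by
    exact ae_iff.mp hUae
  -- the support-like set
  set Spos : Set E := {x | ∀ ε : ℝ, 0 < ε → 0 < ν (Metric.ball x ε)} with hSposDef
  have hSpos : ∀ᵐ x ∂ν, x ∈ Spos := by
    obtain ⟨T, hTc, hT𝒮, hTU⟩ :=
      TopologicalSpace.isOpen_sUnion_countable {t : Set E | IsOpen t ∧ ν t = 0}
        (fun t ht => ht.1)
    have hνT : ν (⋃₀ T) = 0 := by
      rw [Set.sUnion_eq_biUnion]
      exact (measure_biUnion_null_iff hTc).mpr fun s hs => (hT𝒮 hs).2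
    have hcover : Sposᶜ ⊆ ⋃₀ T := by
      rw [hTU]
      intro x hx
      simp only [hSposDef, Set.mem_compl_iff, Set.mem_setOf_eq] at hx
      push_neg at hx
      obtain ⟨ε, hε0, hε⟩ := hx
      exact ⟨Metric.ball x ε, ⟨Metric.isOpen_ball, le_antisymm hε zero_le⟩,
        Metric.mem_ball_self hε0⟩
    exact ae_iff.mpr (measure_mono_null hcover hνT)
  have hSU : Spos ⊆ (U : Set E) := by
    intro x hx
    by_contra hxU
    obtain ⟨ε, hε0, hεsub⟩ := Metric.isOpen_iff.mp hUc.isOpen_compl x hxU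
    have h1 : ν (Metric.ball x ε) ≤ ν ((U : Set E)ᶜ) := measure_mono hεsub
    rw [hUcompl] at h1
    exact absurd (hx ε hε0) (by simpa using h1)
  -- the closed convex hull of the support
  set C : Set E := closure (convexHull ℝ Spos) with hC
  have hCconv : Convex ℝ C := (convex_convexHull ℝ Spos).closure
  have hmem0 : (0 : E) ∈ C := by
    rw [← hmeanν]
    refine Convex.integral_mem hCconv isClosed_closure ?_ hintν
    filter_upwards [hSpos] with x hx
    exact subset_closure (subset_convexHull ℝ _ hx)
  -- move to the subtype
  set S' : Set ↥U := (Subtype.val) ⁻¹' Spos with hS'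
  have hSposImg : Subtype.val '' S' = Spos := by
    rw [hS', Set.image_preimage_eq_of_subset]
    rw [Subtype.range_coe]
    exact hSU
  set D : Set ↥U := closure (convexHull ℝ S') with hD
  have hDconv : Convex ℝ D := (convex_convexHull ℝ S').closure
  have hCD : Subtype.val '' D = C := by
    have hemb : Topology.IsClosedEmbedding ((↑) : ↥U → E) :=
      ⟨Topology.IsEmbedding.subtypeVal, by rwa [Subtype.range_coe]⟩
    rw [hD, ← hemb.closure_image_eq]
    rw [hC, ← hSposImg]
    exact congrArg closure
      (by simpa [Submodule.coe_subtype] using LinearMap.image_convexHull U.subtype S')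
  -- projection onto U
  obtain ⟨V, hUV⟩ := Submodule.exists_isCompl U
  set π : E →ₗ[ℝ] ↥U := U.linearProjOfIsCompl V hUV with hπdef
  have hπ : ∀ x : ↥U, π (x : E) = x := fun x => U.linearProjOfIsCompl_apply_left hUV x
  have hπcont : Continuous π := π.continuous_of_finiteDimensional
  -- key killing property
  have hkill : ∀ g : ↥U →ₗ[ℝ] ℝ, (∀ᵐ x ∂ν, g (π x) = 0) → g = 0 := by
    intro g hg
    have hfWd : (g ∘ₗ π) ∈ Wd := by
      rw [hWd_mem]
      filter_upwards [hg] with x hx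
      simpa using hx
    ext u
    have h2 : (g ∘ₗ π) (u : E) = 0 := ((hU_mem _).mp u.2) (g ∘ₗ π) hfWd
    simpa [hπ u] using h2
  have h0D : (0 : ↥U) ∈ D := by
    have hmem0' : (0 : E) ∈ Subtype.val '' D := by rw [hCD]; exact hmem0
    obtain ⟨w, hwD, hw0⟩ := hmem0'
    have hw : w = 0 := Subtype.ext hw0
    rwa [hw] at hwD
  have hπSpos : ∀ x : E, x ∈ Spos → π x ∈ D := by
    intro x hx
    have hxU : x ∈ U := hSU hx
    have hxD : (⟨x, hxU⟩ : ↥U) ∈ D := by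
      have hxC : x ∈ Subtype.val '' D := by
        rw [hCD]; exact subset_closure (subset_convexHull ℝ _ hx)
      obtain ⟨w, hwD, hwx⟩ := hxC
      have : w = ⟨x, hxU⟩ := Subtype.ext hwx
      rwa [this] at hwD
    have : π x = ⟨x, hxU⟩ := hπ ⟨x, hxU⟩
    rwa [this]
  -- `0` is in the interior of `D` inside `↥U`
  have h0int : (0 : ↥U) ∈ interior D := by
    by_contra h0i
    by_cases hne : (interior D).Nonempty
    · obtain ⟨f', hf'⟩ := geometric_hahn_banach_open_point hDconv.interior isOpen_interior h0i
      obtain ⟨y, hy⟩ := hne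
      have hfy : f' y < 0 := by simpa using hf' y hy
      have hle : ∀ w ∈ D, f' w ≤ 0 := by
        intro w hw
        by_contra hposw
        push_neg at hposw
        set cc : ℝ := f' y - f' w with hcc
        set tt : ℝ := min 1 (f' w / (|cc| + 1)) with htt
        have ht0 : 0 < tt := lt_min one_pos (div_pos hposw (by positivity))
        have ht1 : tt ≤ 1 := min_le_left _ _
        have hmem := hDconv.add_smul_sub_mem_interior hw hy ⟨ht0, ht1⟩
        have hval := hf' _ hmem
        rw [map_add, f'.map_smul, map_sub, map_zero] at hval
        have h2 : tt ≤ f' w / (|cc| + 1) := min_le_right _ _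
        have h3 : tt * (|cc| + 1) ≤ f' w := by
          rw [← le_div_iff₀ (by positivity)]
          exact h2
        simp only [smul_eq_mul] at hval
        nlinarith [neg_abs_le cc, le_abs_self cc]
      set πL : E →L[ℝ] ↥U := ⟨π, hπcont⟩ with hπL
      set g : E →L[ℝ] ℝ := f'.comp πL with hg
      have hgle : ∀ᵐ x ∂ν, g x ≤ 0 := by
        filter_upwards [hSpos] with x hx
        exact hle _ (hπSpos x hx)
      have hgint : Integrable (fun x => g x) ν := g.integrable_comp hintν
      have hgzero : ∫ x, g x ∂ν = 0 := by
        have hc := g.integral_comp_comm hintν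
        have hmean' : ∫ x, id x ∂ν = (0 : E) := hmeanν
        rw [hmean'] at hc
        simpa using hc
      have hgae : ∀ᵐ x ∂ν, g x = 0 := by
        have hneg : 0 ≤ᶠ[ae ν] fun x => -(g x) := by
          filter_upwards [hgle] with x hx
          simp only [Pi.zero_apply]
          linarith [show g x ≤ 0 from hx]
        have hint2 : Integrable (fun x => -(g x)) ν := hgint.neg
        have hzero2 : ∫ x, -(g x) ∂ν = 0 := by rw [integral_neg, hgzero, neg_zero]
        have hev := (integral_eq_zero_iff_of_nonneg_ae hneg hint2).mp hzero2
        filter_upwards [hev] with x hx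
        have : -(g x) = 0 := hx
        linarith
      have hkill' : f'.toLinearMap = 0 := by
        apply hkill
        filter_upwards [hgae] with x hx
        exact hx
      have : f' y = 0 := by
        have := congrArg (fun (h : ↥U →ₗ[ℝ] ℝ) => h y) hkill'
        simpa using this
      linarith
    · have hAtop : affineSpan ℝ D ≠ ⊤ := by
        intro h
        exact hne ((Convex.interior_nonempty_iff_affineSpan_eq_top hDconv).mpr h)
      have hspan : Submodule.span ℝ D ≠ ⊤ := by
        intro htop
        apply hAtop
        have hdir : (affineSpan ℝ D).direction = ⊤ := by
          rw [eq_top_iff, ← htop, Submodule.span_le]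
          intro w hw
          have := AffineSubspace.vsub_mem_direction (subset_affineSpan ℝ D hw)
            (subset_affineSpan ℝ D h0D)
          simpa using this
        rw [eq_top_iff]
        intro v _
        have hvdir : v ∈ (affineSpan ℝ D).direction := by rw [hdir]; trivial
        have := AffineSubspace.vadd_mem_of_mem_direction hvdir (subset_affineSpan ℝ D h0D)
        simpa using this
      obtain ⟨g, hgne, hgbot⟩ := Submodule.exists_dual_map_eq_bot_of_lt_top
        (lt_top_iff_ne_top.mpr hspan) inferInstance
      have hgD : ∀ w ∈ D, g w = 0 := by
        intro w hw
        have : g w ∈ (Submodule.span ℝ D).map g := ⟨w, Submodule.subset_span hw, rfl⟩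
        rw [hgbot] at this
        simpa using this
      have : g = 0 := by
        apply hkill
        filter_upwards [hSpos] with x hx
        exact hgD _ (hπSpos x hx)
      exact hgne this
  -- extract a ball inside D
  obtain ⟨r, hr0, hrball⟩ := Metric.isOpen_iff.mp isOpen_interior 0 h0int
  have hrD : Metric.ball (0 : ↥U) r ⊆ D := hrball.trans interior_subset
  obtain ⟨n, p, hpr, ρ, hρ0, hρball⟩ := aux_cp (F := ↥U) hr0
  have hpD : ∀ i, p i ∈ D := fun i => hrD (mem_ball_zero_iff.mpr (hpr i))
  have happrox : ∀ i, ∃ p' : ↥U, p' ∈ convexHull ℝ S' ∧ ‖p' - p i‖ < ρ/4 := by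
    intro i
    have hcl := hpD i
    rw [hD, Metric.mem_closure_iff] at hcl
    obtain ⟨b', hb'mem, hb'd⟩ := hcl (ρ/4) (by positivity)
    refine ⟨b', hb'mem, ?_⟩
    rw [← dist_eq_norm, dist_comm]
    exact hb'd
  choose p' hp'mem hp'close using happrox
  have hballp' : Metric.ball (0:↥U) (ρ/2) ⊆ convexHull ℝ (Set.range p') := by
    intro x hx
    have hxn : ‖x‖ < ρ/2 := mem_ball_zero_iff.mp hx
    exact aux_stab (by positivity) hρball (fun j => (hp'close j).le) (by linarith)
  have hfin : ∀ i, ∃ t : Finset ↥U, ↑t ⊆ S' ∧ p' i ∈ convexHull ℝ (↑t : Set ↥U) := by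
    intro i
    have hmem := hp'mem i
    rw [convexHull_eq_union_convexHull_finite_subsets] at hmem
    simp only [Set.mem_iUnion] at hmem
    obtain ⟨t, htS, hmem⟩ := hmem
    exact ⟨t, htS, hmem⟩
  choose t ht hmemt using hfin
  set T : Finset ↥U := Finset.univ.biUnion t with hT
  have hTS : (↑T : Set ↥U) ⊆ S' := by
    intro x hx
    rw [hT, Finset.coe_biUnion] at hx
    simp only [Set.mem_iUnion] at hx
    obtain ⟨i, _, hi⟩ := hx
    exact ht i hi
  have hsubT : convexHull ℝ (Set.range p') ⊆ convexHull ℝ (↑T : Set ↥U) := by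
    apply convexHull_min ?_ (convex_convexHull ℝ _)
    rintro _ ⟨i, rfl⟩
    refine convexHull_mono ?_ (hmemt i)
    intro x hx
    rw [hT, Finset.coe_biUnion]
    exact Set.mem_iUnion.mpr ⟨i, Set.mem_iUnion.mpr ⟨Finset.mem_univ i, hx⟩⟩
  set K := T.card with hK
  set e := T.equivFin with he
  set q : Fin K → ↥U := fun j => ((e.symm j : ↥T) : ↥U) with hq
  have hqmem : ∀ j, q j ∈ T := fun j => (e.symm j).2
  have hrangeq : Set.range q = (↑T : Set ↥U) := by
    ext x
    constructor
    · rintro ⟨j, rfl⟩; exact hqmem j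
    · intro hx; exact ⟨e ⟨x, hx⟩, by simp [hq]⟩
  have hballq : Metric.ball (0:↥U) (ρ/2) ⊆ convexHull ℝ (Set.range q) := by
    rw [hrangeq]
    exact hballp'.trans hsubT
  refine ⟨K, fun j => Metric.ball ((q j : E)) (ρ/8) ∩ (U : Set E), ?_, ?_, ?_⟩
  · intro j; exact measurableSet_ball.inter hUc.measurableSet
  · intro j
    have hq' : (q j : E) ∈ Spos := hTS (hqmem j)
    have hballpos : 0 < ν (Metric.ball ((q j : E)) (ρ/8)) := hq' _ (by positivity)
    have hsum := measure_inter_add_diff (μ := ν) (Metric.ball ((q j : E)) (ρ/8))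
      hUc.measurableSet
    have hdiff : ν (Metric.ball ((q j : E)) (ρ/8) \ (U : Set E)) = 0 :=
      measure_mono_null (fun x hx => hx.2) hUcompl
    rw [hdiff, add_zero] at hsum
    rwa [hsum]
  · intro z hz
    set z' : Fin K → ↥U := fun j => ⟨z j, (hz j).2⟩ with hz'
    have hz'close : ∀ j, ‖z' j - q j‖ ≤ ρ/8 := by
      intro j
      have hdist := (hz j).1
      rw [Metric.mem_ball, dist_eq_norm] at hdist
      have hnorm : ‖z' j - q j‖ = ‖z j - (q j : E)‖ := by
        rw [Submodule.coe_norm]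
        rfl
      rw [hnorm]
      exact hdist.le
    have h0conv : (0 : ↥U) ∈ convexHull ℝ (Set.range z') := by
      refine aux_stab (show (0:ℝ) ≤ ρ/8 by positivity) hballq hz'close ?_
      simp
      linarith
    have h0img : (0 : E) ∈ Subtype.val '' (convexHull ℝ (Set.range z')) :=
      ⟨0, h0conv, rfl⟩
    have himg := LinearMap.image_convexHull U.subtype (Set.range z')
    have hcomp : (⇑U.subtype) '' (Set.range z') = Set.range z := by
      rw [← Set.range_comp]
      congr 1
    rw [show (Subtype.val '' (convexHull ℝ (Set.range z')) : Set E)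
        = (⇑U.subtype) '' (convexHull ℝ (Set.range z')) from rfl, himg, hcomp] at h0img
    exact h0img

/-- Main theorem (Theorem 3.2): for i.i.d. copies `Xs 0, Xs 1, …` of `X` and a measurable
`φ : 𝒳 → ℝ^d` with `E‖φ(X)‖ < ∞`, almost surely there is a positive integer `N` such that
`E[φ(X)]` lies in the convex hull of `{φ(Xs 0), …, φ(Xs (N-1))}`. -/
theorem monte_carlo_cubature {d : ℕ} {𝒳 : Type*} [m𝒳 : MeasurableSpace 𝒳]
    {Ω : Type*} [MeasurableSpace Ω] (P : Measure Ω) [IsProbabilityMeasure P]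
    (X : Ω → 𝒳) (hX : Measurable X)
    (Xs : ℕ → Ω → 𝒳) (hXs : ∀ i, Measurable (Xs i))
    (hindep : iIndepFun Xs P)
    (hident : ∀ i, IdentDistrib (Xs i) X P P)
    (φ : 𝒳 → Fin d → ℝ) (hφ : Measurable φ)
    (hint : Integrable (fun ω => φ (X ω)) P) :
    ∀ᵐ ω ∂P, ∃ N : ℕ, 0 < N ∧
      (∫ ω', φ (X ω') ∂P) ∈ convexHull ℝ ((fun i => φ (Xs i ω)) '' Set.Iio N) := by
  classical
  set μ0 : Fin d → ℝ := ∫ ω', φ (X ω') ∂P with hμ0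
  set ψ : 𝒳 → Fin d → ℝ := fun a => φ a - μ0 with hψdef
  have hψ : Measurable ψ := hφ.sub measurable_const
  set ν : Measure (Fin d → ℝ) := Measure.map (fun ω => ψ (X ω)) P with hν
  have hmeasψX : Measurable fun ω => ψ (X ω) := hψ.comp hX
  haveI : IsProbabilityMeasure ν := Measure.isProbabilityMeasure_map hmeasψX.aemeasurable
  have hintψ : Integrable (fun ω => ψ (X ω)) P := hint.sub (integrable_const μ0)
  have hintν : Integrable id ν := by
    rw [hν, integrable_map_measure aestronglyMeasurable_id hmeasψX.aemeasurable]
    exact hintψ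
  have hmeanν : ∫ x, x ∂ν = 0 := by
    have h := integral_map (μ := P) (φ := fun ω => ψ (X ω)) hmeasψX.aemeasurable
      (f := (id : (Fin d → ℝ) → (Fin d → ℝ))) aestronglyMeasurable_id
    simp only [id_eq] at h
    rw [hν, h]
    have h2 : ∫ ω, ψ (X ω) ∂P = (∫ ω, φ (X ω) ∂P) - μ0 := by
      rw [hψdef]
      simp only
      rw [integral_sub hint (integrable_const μ0), integral_const]
      simp
    rw [h2, hμ0, sub_self]
  obtain ⟨K, B, hBm, hBpos, hBconv⟩ := aux_geo ν hintν hmeanν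
  -- the events
  set Sset : Fin K → Set 𝒳 := fun j => ψ ⁻¹' (B j) with hSset
  have hSm : ∀ j, MeasurableSet (Sset j) := fun j => hψ (hBm j)
  have hmap : ∀ j, ν (B j) = P (X ⁻¹' Sset j) := by
    intro j
    rw [hν, Measure.map_apply hmeasψX (hBm j)]
    rfl
  have hPi : ∀ i j, P (Xs i ⁻¹' Sset j) = ν (B j) := by
    intro i j
    rw [(hident i).measure_mem_eq (hSm j), hmap j]
  -- almost surely every target set is hit
  have hae : ∀ᵐ ω ∂P, ∀ j : Fin K, ∃ i : ℕ, Xs i ω ∈ Sset j := by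
    rw [ae_all_iff]
    intro j
    set A : ℕ → Set Ω := fun i => Xs i ⁻¹' Sset j with hA
    have hAm : ∀ i, MeasurableSet (A i) := fun i => hXs i (hSm j)
    have hprod : ∀ M : ℕ, P (⋂ i ∈ Finset.range M, (A i)ᶜ) = (1 - ν (B j)) ^ M := by
      intro M
      have := hindep.meas_biInter (S := Finset.range M) (s := fun i => (A i)ᶜ)
        (fun i _ => ⟨(Sset j)ᶜ, (hSm j).compl, rfl⟩)
      rw [this]
      have hcompl : ∀ i, P ((A i)ᶜ) = 1 - ν (B j) := by
        intro i
        rw [prob_compl_eq_one_sub (hAm i), hA]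
        simp only
        rw [hPi i j]
      calc ∏ i ∈ Finset.range M, P ((A i)ᶜ)
          = ∏ _i ∈ Finset.range M, (1 - ν (B j)) := by
            exact Finset.prod_congr rfl fun i _ => hcompl i
        _ = (1 - ν (B j)) ^ M := by rw [Finset.prod_const, Finset.card_range]
    have hlt1 : 1 - ν (B j) < 1 :=
      ENNReal.sub_lt_self ENNReal.one_ne_top one_ne_zero (hBpos j).ne'
    have htend := ENNReal.tendsto_pow_atTop_nhds_zero_of_lt_one hlt1
    have hle : ∀ M : ℕ, P (⋂ i, (A i)ᶜ) ≤ (1 - ν (B j)) ^ M := by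
      intro M
      rw [← hprod M]
      exact measure_mono (fun x hx => by
        simp only [Set.mem_iInter] at hx ⊢
        intro i _
        exact hx i)
    have hzero : P (⋂ i, (A i)ᶜ) = 0 := by
      have hle0 : P (⋂ i, (A i)ᶜ) ≤ 0 :=
        ge_of_tendsto htend (Filter.Eventually.of_forall hle)
      exact le_antisymm hle0 zero_le
    rw [ae_iff]
    convert hzero using 2
    ext ω
    simp [hA, Sset]
  -- conclude
  filter_upwards [hae] with ω hω
  choose idx hidx using hω
  set N : ℕ := (Finset.univ.sup idx) + 1 with hN
  refine ⟨N, Nat.succ_pos _, ?_⟩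
  set z : Fin K → (Fin d → ℝ) := fun j => ψ (Xs (idx j) ω) with hz
  have hzB : ∀ j, z j ∈ B j := fun j => hidx j
  have h0conv : (0 : Fin d → ℝ) ∈ convexHull ℝ (Set.range z) := hBconv z hzB
  set A' : Set (Fin d → ℝ) := (fun i => φ (Xs i ω)) '' Set.Iio N with hA'
  -- the affine translation map
  set Tr : (Fin d → ℝ) →ᵃ[ℝ] (Fin d → ℝ) :=
    { toFun := fun x => x - μ0
      linear := LinearMap.id
      map_vadd' := by
        intro p v
        show (v + p) - μ0 = v + (p - μ0)
        ring } with hTr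
  have hrange_sub : Set.range z ⊆ Tr '' A' := by
    rintro _ ⟨j, rfl⟩
    refine ⟨φ (Xs (idx j) ω), ⟨idx j, ?_, rfl⟩, rfl⟩
    have : idx j ≤ Finset.univ.sup idx := Finset.le_sup (Finset.mem_univ j)
    exact Nat.lt_succ_of_le this
  have h0conv' : (0 : Fin d → ℝ) ∈ convexHull ℝ (Tr '' A') :=
    convexHull_mono hrange_sub h0conv
  rw [← AffineMap.image_convexHull] at h0conv'
  obtain ⟨a, haconv, ha0⟩ := h0conv'
  have : a = μ0 := by
    have : a - μ0 = 0 := ha0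
    have := sub_eq_zero.mp this
    exact this
  rwa [this] at haconv
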